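/- There is exactly one family (φₙ)_{n ≥ 1} of order-n grid enumerations such that for every n: (i) any two consecutive cells φₙ(j), φₙ(j+1) are edge-adjacent (adjacency condition); (ii) φₙ(0) = (0,0) and φₙ(4^n − 1) = (2^n − 1, 0) (endpoint condition); and (iii) for all j < 4^{n+1}, integer division of both coordinates of φ_{n+1}(j) by 2 yields φₙ(⌊j/4⌋) (nesting condition). This family is the sequence of order-n approximations of the Hilbert curve, which is uniquely determined by the nesting and adjacency conditions together with the prescribed first and last subsquares. -/

import Mathlib

/-- An order-`n` grid enumeration: a bijection between `Fin (4^n)` and the cells of the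
`2^n × 2^n` grid; cell `(a,b)` represents the subsquare with lower-left corner
`(a/2^n, b/2^n)`. -/
abbrev GridEnum (n : ℕ) := Fin (4 ^ n) ≃ Fin (2 ^ n) × Fin (2 ^ n)

/-- Two grid cells are edge-adjacent if their coordinates (as integers) satisfy
`|a − a'| + |b − b'| = 1`. -/
def edgeAdj {m : ℕ} (c d : Fin m × Fin m) : Prop :=
  |((c.1 : ℕ) : ℤ) - ((d.1 : ℕ) : ℤ)| + |((c.2 : ℕ) : ℤ) - ((d.2 : ℕ) : ℤ)| = 1

/-- Two grid cells are king-adjacent if their coordinates (as integers) satisfy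
`max (|a − a'|) (|b − b'|) = 1`. -/
def kingAdj {m : ℕ} (c d : Fin m × Fin m) : Prop :=
  max |((c.1 : ℕ) : ℤ) - ((d.1 : ℕ) : ℤ)| |((c.2 : ℕ) : ℤ) - ((d.2 : ℕ) : ℤ)| = 1

/-- Adjacency condition: any two consecutive cells of the enumeration are edge-adjacent. -/
def ConsecEdgeAdj {n : ℕ} (φ : GridEnum n) : Prop :=
  ∀ (j : ℕ) (h : j + 1 < 4 ^ n), edgeAdj (φ ⟨j, Nat.lt_of_succ_lt h⟩) (φ ⟨j + 1, h⟩)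

/-- Any two consecutive cells of the enumeration are king-adjacent. -/
def ConsecKingAdj {n : ℕ} (φ : GridEnum n) : Prop :=
  ∀ (j : ℕ) (h : j + 1 < 4 ^ n), kingAdj (φ ⟨j, Nat.lt_of_succ_lt h⟩) (φ ⟨j + 1, h⟩)

/-- Endpoint condition: the enumeration starts at the lower-left cell `(0,0)` and ends
at the lower-right cell `(2^n − 1, 0)`. -/
def EndpointCond {n : ℕ} (φ : GridEnum n) : Prop :=
  φ ⟨0, by positivity⟩ = (⟨0, by positivity⟩, ⟨0, by positivity⟩) ∧
  φ ⟨4 ^ n - 1, Nat.sub_lt (by positivity) Nat.one_pos⟩ =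
    (⟨2 ^ n - 1, Nat.sub_lt (by positivity) Nat.one_pos⟩, ⟨0, by positivity⟩)

/-- Nesting condition: integer division of both coordinates of `φₙ₊₁ j` by 2 yields
`φₙ ⌊j/4⌋`. -/
def Nests {n : ℕ} (φn : GridEnum n) (φn1 : GridEnum (n + 1)) : Prop :=
  ∀ j : Fin (4 ^ (n + 1)),
    ((φn1 j).1 : ℕ) / 2 =
      ((φn ⟨(j : ℕ) / 4, by
        have hj : (j : ℕ) < 4 ^ n * 4 := by simpa [pow_succ] using j.isLt
        omega⟩).1 : ℕ) ∧
    ((φn1 j).2 : ℕ) / 2 =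
      ((φn ⟨(j : ℕ) / 4, by
        have hj : (j : ℕ) < 4 ^ n * 4 := by simpa [pow_succ] using j.isLt
        omega⟩).2 : ℕ)


/-- Hilbert curve coordinates: order n, index t (meaningful for t < 4^n). -/
def hc : ℕ → ℕ → ℕ × ℕ
  | 0, _ => (0, 0)
  | n+1, t =>
    let p := hc n (t % 4 ^ n)
    match t / 4 ^ n with
    | 0 => (p.2, p.1)
    | 1 => (p.1, p.2 + 2 ^ n)
    | 2 => (p.1 + 2 ^ n, p.2 + 2 ^ n)
    | _ => (2 ^ (n+1) - 1 - p.2, 2 ^ n - 1 - p.1)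

/-- nat-level adjacency -/
def adjN (u v : ℕ × ℕ) : Prop :=
  (u.1 = v.1 ∧ (u.2 + 1 = v.2 ∨ v.2 + 1 = u.2)) ∨
  (u.2 = v.2 ∧ (u.1 + 1 = v.1 ∨ v.1 + 1 = u.1))

lemma hc_lt (n t : ℕ) : (hc n t).1 < 2 ^ n ∧ (hc n t).2 < 2 ^ n := by
  induction n generalizing t with
  | zero => simp [hc]
  | succ n ih =>
    have h2 : (2:ℕ) ^ (n+1) = 2 * 2 ^ n := by ring
    obtain ⟨h1', h2'⟩ := ih (t % 4 ^ n)
    unfold hc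
    rcases q : t / 4 ^ n with _ | _ | _ | q <;> simp only [] <;> omega

lemma hc_zero (n : ℕ) : hc n 0 = (0, 0) := by
  induction n with
  | zero => rfl
  | succ n ih =>
    have h4 : 0 < 4 ^ n := Nat.pow_pos (by norm_num)
    unfold hc
    rw [Nat.zero_mod, Nat.zero_div, ih]
    rfl

lemma hc_last (n : ℕ) : hc n (4 ^ n - 1) = (2 ^ n - 1, 0) := by
  induction n with
  | zero => rfl
  | succ n ih =>
    have h4 : 0 < 4 ^ n := Nat.pow_pos (by norm_num)
    have e : 4 ^ (n+1) - 1 = 3 * 4 ^ n + (4 ^ n - 1) := by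
      have : (4:ℕ) ^ (n+1) = 4 * 4 ^ n := by ring
      omega
    have hdiv : (4 ^ (n+1) - 1) / 4 ^ n = 3 := by
      rw [e, show 3 * 4 ^ n = 4 ^ n * 3 by ring, Nat.mul_add_div h4,
        Nat.div_eq_of_lt (by omega)]
    have hmod : (4 ^ (n+1) - 1) % 4 ^ n = 4 ^ n - 1 := by
      rw [e, show 3 * 4 ^ n = 4 ^ n * 3 by ring, Nat.mul_add_mod, Nat.mod_eq_of_lt (by omega)]
    have h2 : (2:ℕ) ^ (n+1) = 2 * 2 ^ n := by ring
    have h2p : 0 < 2 ^ n := Nat.pow_pos (by norm_num)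
    unfold hc
    rw [hdiv, hmod, ih]
    simp only [Prod.mk.injEq]
    omega

lemma qm_divmod {m : ℕ} (hm : 0 < m) (q r : ℕ) (hr : r < m) :
    (m * q + r) / m = q ∧ (m * q + r) % m = r := by
  rw [Nat.mul_add_div hm, Nat.mul_add_mod, Nat.div_eq_of_lt hr, Nat.mod_eq_of_lt hr]
  omega

lemma hc_succ_eq (n t : ℕ) : hc (n+1) t =
    (match t / 4 ^ n with
    | 0 => ((hc n (t % 4^n)).2, (hc n (t % 4^n)).1)
    | 1 => ((hc n (t % 4^n)).1, (hc n (t % 4^n)).2 + 2 ^ n)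
    | 2 => ((hc n (t % 4^n)).1 + 2 ^ n, (hc n (t % 4^n)).2 + 2 ^ n)
    | _ => (2 ^ (n+1) - 1 - (hc n (t % 4^n)).2, 2 ^ n - 1 - (hc n (t % 4^n)).1)) := rfl

lemma hc_succ_ite (n t : ℕ) : hc (n+1) t =
    (if t / 4 ^ n = 0 then ((hc n (t % 4^n)).2, (hc n (t % 4^n)).1)
     else if t / 4 ^ n = 1 then ((hc n (t % 4^n)).1, (hc n (t % 4^n)).2 + 2 ^ n)
     else if t / 4 ^ n = 2 then ((hc n (t % 4^n)).1 + 2 ^ n, (hc n (t % 4^n)).2 + 2 ^ n)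
     else (2 ^ (n+1) - 1 - (hc n (t % 4^n)).2, 2 ^ n - 1 - (hc n (t % 4^n)).1)) := by
  rw [hc_succ_eq]
  rcases h : t / 4 ^ n with _ | _ | _ | q <;> simp

lemma hc_inj (n : ℕ) : ∀ t t', t < 4 ^ n → t' < 4 ^ n → hc n t = hc n t' → t = t' := by
  induction n with
  | zero => intro t t' ht ht' _; omega
  | succ n ih =>
    intro t t' ht ht' h
    have h4 : 0 < 4 ^ n := Nat.pow_pos (by norm_num)
    have h2 : (2:ℕ) ^ (n+1) = 2 * 2 ^ n := by ring
    have h44 : (4:ℕ) ^ (n+1) = 4 ^ n * 4 := by ring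
    obtain ⟨hx, hy⟩ := hc_lt n (t % 4 ^ n)
    obtain ⟨hx', hy'⟩ := hc_lt n (t' % 4 ^ n)
    have hmlt : t % 4 ^ n < 4 ^ n := Nat.mod_lt _ h4
    have hmlt' : t' % 4 ^ n < 4 ^ n := Nat.mod_lt _ h4
    have ihr := ih (t % 4 ^ n) (t' % 4 ^ n) hmlt hmlt'
    have ht1 : 4 ^ n * (t / 4 ^ n) + t % 4 ^ n = t := Nat.div_add_mod t (4 ^ n)
    have ht1' : 4 ^ n * (t' / 4 ^ n) + t' % 4 ^ n = t' := Nat.div_add_mod t' (4 ^ n)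
    rw [hc_succ_ite, hc_succ_ite] at h
    have hqlt : t / 4 ^ n < 4 := (Nat.div_lt_iff_lt_mul h4).2 (by omega)
    have hqlt' : t' / 4 ^ n < 4 := (Nat.div_lt_iff_lt_mul h4).2 (by omega)
    generalize hq : t / 4 ^ n = q at h ht1 hqlt
    generalize hq' : t' / 4 ^ n = q' at h ht1' hqlt'
    interval_cases q <;> interval_cases q' <;>
      (try norm_num [Prod.mk.injEq] at h) <;>
      first
        | omega
        | (have hpp : hc n (t % 4 ^ n) = hc n (t' % 4 ^ n) := by
             have e1 : (hc n (t % 4 ^ n)).1 = (hc n (t' % 4 ^ n)).1 := by omega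
             have e2 : (hc n (t % 4 ^ n)).2 = (hc n (t' % 4 ^ n)).2 := by omega
             exact Prod.ext e1 e2
           have := ihr hpp
           omega)

lemma hc_nest (n : ℕ) : ∀ t, t < 4 ^ (n+1) →
    (hc (n+1) t).1 / 2 = (hc n (t / 4)).1 ∧ (hc (n+1) t).2 / 2 = (hc n (t / 4)).2 := by
  induction n with
  | zero =>
    intro t ht
    interval_cases t <;> simp [hc]
  | succ n ih =>
    intro t ht
    have h4 : 0 < 4 ^ n := Nat.pow_pos (by norm_num)
    have h41 : 0 < 4 ^ (n+1) := Nat.pow_pos (by norm_num)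
    have h44 : (4:ℕ) ^ (n+2) = 4 ^ (n+1) * 4 := by ring
    have h2 : (2:ℕ) ^ (n+2) = 2 * 2 ^ (n+1) := by ring
    have h2' : (2:ℕ) ^ (n+1) = 2 * 2 ^ n := by ring
    -- rewrite the inner quantities of hc n (t/4)
    have hdd : t / 4 / 4 ^ n = t / 4 ^ (n+1) := by
      rw [Nat.div_div_eq_div_mul]
      congr 1
      ring
    have hmm : t / 4 % 4 ^ n = t % 4 ^ (n+1) / 4 := by
      have := Nat.mod_mul_right_div_self t 4 (4 ^ n)
      rw [show (4:ℕ) * 4 ^ n = 4 ^ (n+1) by ring] at this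
      omega
    obtain ⟨k1, k2⟩ := ih (t % 4 ^ (n+1)) (Nat.mod_lt _ h41)
    obtain ⟨b1, b2⟩ := hc_lt (n+1) (t % 4 ^ (n+1))
    obtain ⟨c1, c2⟩ := hc_lt n (t % 4 ^ (n+1) / 4)
    rw [hc_succ_ite (n+1) t, hc_succ_ite n (t/4), hdd, hmm]
    have hqlt : t / 4 ^ (n+1) < 4 := (Nat.div_lt_iff_lt_mul h41).2 (by omega)
    generalize hq : t / 4 ^ (n+1) = q at hqlt ⊢
    interval_cases q <;> (try norm_num) <;> constructor <;> omega

def adjP (n : ℕ) (t t' : ℕ) : Prop := adjN (hc n t) (hc n t')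

lemma hc_adj (n : ℕ) : ∀ t, t + 1 < 4 ^ n → adjN (hc n t) (hc n (t+1)) := by
  induction n with
  | zero => intro t ht; omega
  | succ n ih =>
    intro t ht
    have h4 : 0 < 4 ^ n := Nat.pow_pos (by norm_num)
    have h44 : (4:ℕ) ^ (n+1) = 4 ^ n * 4 := by ring
    have h2 : (2:ℕ) ^ (n+1) = 2 * 2 ^ n := by ring
    have h2p : 0 < 2 ^ n := Nat.pow_pos (by norm_num)
    have ht1 : 4 ^ n * (t / 4 ^ n) + t % 4 ^ n = t := Nat.div_add_mod t (4 ^ n)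
    have hqlt : t / 4 ^ n < 4 := (Nat.div_lt_iff_lt_mul h4).2 (by omega)
    by_cases hr : t % 4 ^ n + 1 < 4 ^ n
    · -- same quadrant
      have hih := ih (t % 4 ^ n) hr
      have hdm := qm_divmod h4 (t / 4 ^ n) (t % 4 ^ n + 1) hr
      have he : 4 ^ n * (t / 4 ^ n) + (t % 4 ^ n + 1) = t + 1 := by omega
      rw [he] at hdm
      obtain ⟨hx, hy⟩ := hc_lt n (t % 4 ^ n)
      obtain ⟨hx', hy'⟩ := hc_lt n ((t+1) % 4 ^ n)
      rw [hc_succ_ite, hc_succ_ite, hdm.1, hdm.2]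
      rw [hdm.2] at hx' hy'
      rw [show (t % 4 ^ n + 1) = t % 4 ^ n + 1 from rfl] at hih
      generalize hq : t / 4 ^ n = q at hqlt ⊢
      simp only [adjN] at hih ⊢
      interval_cases q <;> (try norm_num) <;> omega
    · -- boundary between quadrants
      have hrl : t % 4 ^ n < 4 ^ n := Nat.mod_lt _ h4
      have hre : t % 4 ^ n = 4 ^ n - 1 := by omega
      have hd : 4 ^ n * (t / 4 ^ n + 1) = 4 ^ n * (t / 4 ^ n) + 4 ^ n := by ring
      have he : t + 1 = 4 ^ n * (t / 4 ^ n + 1) := by omega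
      have hdm := qm_divmod h4 (t / 4 ^ n + 1) 0 h4
      rw [Nat.add_zero, ← he] at hdm
      have hq1 : t / 4 ^ n + 1 < 4 := by
        by_contra hcon
        have h5 : 4 ≤ t / 4 ^ n + 1 := by omega
        have := Nat.mul_le_mul_left (4 ^ n) h5
        omega
      rw [hc_succ_ite, hc_succ_ite, hdm.1, hdm.2, hre, hc_last, hc_zero]
      generalize hq : t / 4 ^ n = q at hq1 ⊢
      have hq2 : q < 3 := by omega
      simp only [adjN]
      interval_cases q <;> (try norm_num) <;> omega

def hilbertFun (n : ℕ) (j : Fin (4^n)) : Fin (2^n) × Fin (2^n) :=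
  (⟨(hc n j).1, (hc_lt n j).1⟩, ⟨(hc n j).2, (hc_lt n j).2⟩)

lemma hilbertFun_inj (n : ℕ) : Function.Injective (hilbertFun n) := by
  intro a b h
  simp only [hilbertFun, Prod.mk.injEq, Fin.mk.injEq] at h
  exact Fin.ext (hc_inj n a b a.isLt b.isLt (Prod.ext h.1 h.2))

noncomputable def hilbertEnum (n : ℕ) : GridEnum n :=
  Equiv.ofBijective (hilbertFun n)
    ((Fintype.bijective_iff_injective_and_card _).2 ⟨hilbertFun_inj n,
      by simp only [Fintype.card_fin, Fintype.card_prod,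
        show (4:ℕ) = 2*2 from rfl, mul_pow]⟩)

lemma hilbertEnum_apply (n : ℕ) (j : Fin (4^n)) : hilbertEnum n j = hilbertFun n j := rfl

lemma edgeAdj_iff {m : ℕ} (c d : Fin m × Fin m) :
    edgeAdj c d ↔ adjN ((c.1 : ℕ), (c.2 : ℕ)) ((d.1 : ℕ), (d.2 : ℕ)) := by
  unfold edgeAdj adjN
  rw [Int.abs_eq_natAbs, Int.abs_eq_natAbs]
  simp only []
  omega

lemma hilbert_adj (n : ℕ) : ConsecEdgeAdj (hilbertEnum n) := by
  intro j h
  rw [edgeAdj_iff]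
  have := hc_adj n j h
  simp only [adjN] at this ⊢
  simp only [hilbertEnum_apply, hilbertFun]
  omega

lemma hilbert_endpoint (n : ℕ) : EndpointCond (hilbertEnum n) := by
  constructor
  · simp only [hilbertEnum_apply, hilbertFun, Prod.mk.injEq, Fin.mk.injEq]
    rw [hc_zero]
    exact ⟨rfl, rfl⟩
  · simp only [hilbertEnum_apply, hilbertFun, Prod.mk.injEq, Fin.mk.injEq]
    rw [hc_last]
    exact ⟨rfl, rfl⟩

lemma hilbert_nests (n : ℕ) : Nests (hilbertEnum n) (hilbertEnum (n+1)) := by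
  intro j
  exact ⟨(hc_nest n j j.isLt).1, (hc_nest n j j.isLt).2⟩

-- ==================== uniqueness machinery ====================

def adjB (c d : Fin 2 × Fin 2) : Prop :=
  ((c.1 : ℕ) = d.1 ∧ ((c.2:ℕ) + 1 = d.2 ∨ (d.2:ℕ) + 1 = c.2)) ∨
  ((c.2 : ℕ) = d.2 ∧ ((c.1:ℕ) + 1 = d.1 ∨ (d.1:ℕ) + 1 = c.1))

instance : ∀ c d, Decidable (adjB c d) := fun c d => by unfold adjB; infer_instance

def pflip (a : Fin 2) : Fin 2 := ⟨1 - a.1, by omega⟩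

def pathSecond (c d : Fin 2 × Fin 2) : Fin 2 × Fin 2 :=
  if c.1 = d.1 then (pflip c.1, c.2) else (c.1, pflip c.2)

set_option maxRecDepth 10000 in
theorem blk_adj03 : ∀ f : Fin 4 → Fin 2 × Fin 2, Function.Injective f →
    adjB (f 0) (f 1) → adjB (f 1) (f 2) → adjB (f 2) (f 3) → adjB (f 0) (f 3) := by decide

set_option maxRecDepth 10000 in
theorem blk_f1 : ∀ f : Fin 4 → Fin 2 × Fin 2, Function.Injective f →
    adjB (f 0) (f 1) → adjB (f 1) (f 2) → adjB (f 2) (f 3) →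
    f 1 = pathSecond (f 0) (f 3) := by decide

set_option maxRecDepth 10000 in
theorem blk_f2 : ∀ f : Fin 4 → Fin 2 × Fin 2, Function.Injective f →
    adjB (f 0) (f 1) → adjB (f 1) (f 2) → adjB (f 2) (f 3) →
    f 2 = pathSecond (f 3) (f 0) := by decide

lemma nest_at {n : ℕ} (ψ : GridEnum n) (θ : GridEnum (n+1)) (h : Nests ψ θ)
    (j : ℕ) (hj : j < 4^(n+1)) (k : ℕ) (hk : k < 4^n) (hjk : j/4 = k) :
    ((θ ⟨j,hj⟩).1 : ℕ)/2 = ((ψ ⟨k,hk⟩).1 : ℕ) ∧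
    ((θ ⟨j,hj⟩).2 : ℕ)/2 = ((ψ ⟨k,hk⟩).2 : ℕ) := by
  subst hjk
  exact ⟨(h ⟨j, hj⟩).1, (h ⟨j, hj⟩).2⟩

/-- Block structure: within block `k`, the offsets form an injective path in the 2×2 square. -/
lemma block_struct {n : ℕ} (ψ : GridEnum n) (θ : GridEnum (n+1))
    (hNθ : Nests ψ θ) (hAθ : ConsecEdgeAdj θ) (k : ℕ) (hk : k < 4^n) :
    ∃ f : Fin 4 → Fin 2 × Fin 2, Function.Injective f ∧
      adjB (f 0) (f 1) ∧ adjB (f 1) (f 2) ∧ adjB (f 2) (f 3) ∧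
      ∀ (r : ℕ) (hr : r < 4) (hj : 4*k+r < 4^(n+1)),
        ((θ ⟨4*k+r, hj⟩).1 : ℕ) = 2*((ψ ⟨k,hk⟩).1:ℕ) + ((f ⟨r, hr⟩).1 : ℕ) ∧
        ((θ ⟨4*k+r, hj⟩).2 : ℕ) = 2*((ψ ⟨k,hk⟩).2:ℕ) + ((f ⟨r, hr⟩).2 : ℕ) := by
  have hp4 : (4:ℕ)^(n+1) = 4^n * 4 := pow_succ 4 n
  have hjr : ∀ r : Fin 4, 4*k+(r:ℕ) < 4^(n+1) := fun r => by have := r.isLt; omega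
  set f : Fin 4 → Fin 2 × Fin 2 := fun r =>
    (⟨((θ ⟨4*k+(r:ℕ), hjr r⟩).1 : ℕ) % 2, by omega⟩,
     ⟨((θ ⟨4*k+(r:ℕ), hjr r⟩).2 : ℕ) % 2, by omega⟩) with hfdef
  have key : ∀ (r : ℕ) (hr : r < 4) (hj : 4*k+r < 4^(n+1)),
      ((θ ⟨4*k+r, hj⟩).1 : ℕ) = 2*((ψ ⟨k,hk⟩).1:ℕ) + ((f ⟨r, hr⟩).1 : ℕ) ∧
      ((θ ⟨4*k+r, hj⟩).2 : ℕ) = 2*((ψ ⟨k,hk⟩).2:ℕ) + ((f ⟨r, hr⟩).2 : ℕ) := by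
    intro r hr hj
    obtain ⟨c1, c2⟩ := nest_at ψ θ hNθ (4*k+r) hj k hk (by omega)
    have e1 : ((f ⟨r, hr⟩).1 : ℕ) = ((θ ⟨4*k+r, hj⟩).1 : ℕ) % 2 := rfl
    have e2 : ((f ⟨r, hr⟩).2 : ℕ) = ((θ ⟨4*k+r, hj⟩).2 : ℕ) % 2 := rfl
    omega
  have chain : ∀ (r : ℕ) (hr : r + 1 < 4) (h0 : r < 4),
      adjB (f ⟨r, h0⟩) (f ⟨r+1, hr⟩) := by
    intro r hr h0
    have hj1 : 4*k+r+1 < 4^(n+1) := by omega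
    have hadj := hAθ (4*k+r) hj1
    rw [edgeAdj_iff] at hadj
    simp only [adjN] at hadj
    have c1 := key r h0 (Nat.lt_of_succ_lt hj1)
    have c2 : ((θ ⟨4*k+r+1, hj1⟩).1 : ℕ) = 2*((ψ ⟨k,hk⟩).1:ℕ) + ((f ⟨r+1, hr⟩).1 : ℕ) ∧
        ((θ ⟨4*k+r+1, hj1⟩).2 : ℕ) = 2*((ψ ⟨k,hk⟩).2:ℕ) + ((f ⟨r+1, hr⟩).2 : ℕ) :=
      key (r+1) hr (by omega)
    unfold adjB
    omega
  refine ⟨f, ?_, chain 0 (by norm_num) (by norm_num), chain 1 (by norm_num) (by norm_num),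
    chain 2 (by norm_num) (by norm_num), key⟩
  -- injectivity
  intro r r' hrr
  have k1 := key (r:ℕ) r.isLt (hjr r)
  have k2 := key (r':ℕ) r'.isLt (hjr r')
  have er : f ⟨(r:ℕ), r.isLt⟩ = f r := rfl
  have er' : f ⟨(r':ℕ), r'.isLt⟩ = f r' := rfl
  rw [er] at k1; rw [er'] at k2
  have v1 : ((f r).1 : ℕ) = ((f r').1 : ℕ) := by rw [hrr]
  have v2 : ((f r).2 : ℕ) = ((f r').2 : ℕ) := by rw [hrr]
  have hvv : θ ⟨4*k+(r:ℕ), hjr r⟩ = θ ⟨4*k+(r':ℕ), hjr r'⟩ := by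
    refine Prod.ext (Fin.ext ?_) (Fin.ext ?_) <;> omega
  have hii := θ.injective hvv
  have hval : 4*k+(r:ℕ) = 4*k+(r':ℕ) := congrArg Fin.val hii
  exact Fin.ext (by omega)

lemma step_unique {n : ℕ} (ψ : GridEnum n) (hψ : ConsecEdgeAdj ψ)
    (φ φ' : GridEnum (n+1))
    (hA : ConsecEdgeAdj φ) (hE : EndpointCond φ) (hN : Nests ψ φ)
    (hA' : ConsecEdgeAdj φ') (hE' : EndpointCond φ') (hN' : Nests ψ φ') :
    φ = φ' := by
  have hp4 : (4:ℕ)^(n+1) = 4^n * 4 := pow_succ 4 n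
  have h4pos : 0 < (4:ℕ)^n := Nat.pow_pos (by norm_num)
  have h04 : (0:ℕ) < 4 := by norm_num
  have h14 : (1:ℕ) < 4 := by norm_num
  have h24 : (2:ℕ) < 4 := by norm_num
  have h34 : (3:ℕ) < 4 := by norm_num
  have FILL : ∀ (k : ℕ) (hk : k < 4^n),
      (∀ hj0 : 4*k+0 < 4^(n+1), φ ⟨4*k+0, hj0⟩ = φ' ⟨4*k+0, hj0⟩) →
      (∀ (r : ℕ) (hr : r < 4) (hj : 4*k+r < 4^(n+1)), φ ⟨4*k+r, hj⟩ = φ' ⟨4*k+r, hj⟩) := by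
    intro k hk hent
    obtain ⟨f, finj, fa01, fa12, fa23, fc⟩ := block_struct ψ φ hN hA k hk
    obtain ⟨f', finj', fa01', fa12', fa23', fc'⟩ := block_struct ψ φ' hN' hA' k hk
    have hj0 : 4*k+0 < 4^(n+1) := by omega
    have hj3 : 4*k+3 < 4^(n+1) := by omega
    have fc0 := fc 0 h04 hj0
    have fc0' := fc' 0 h04 hj0
    have fc3 := fc 3 h34 hj3
    have fc3' := fc' 3 h34 hj3
    have hent0 := hent hj0
    have hev1 : ((φ ⟨4*k+0, hj0⟩).1 : ℕ) = ((φ' ⟨4*k+0, hj0⟩).1 : ℕ) := by rw [hent0]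
    have hev2 : ((φ ⟨4*k+0, hj0⟩).2 : ℕ) = ((φ' ⟨4*k+0, hj0⟩).2 : ℕ) := by rw [hent0]
    have hf0 : f ⟨0, h04⟩ = f' ⟨0, h04⟩ := by
      refine Prod.ext (Fin.ext ?_) (Fin.ext ?_) <;> omega
    have hf01 : ((f ⟨0,h04⟩).1 : ℕ) = ((f' ⟨0,h04⟩).1 : ℕ) := by rw [hf0]
    have hf02 : ((f ⟨0,h04⟩).2 : ℕ) = ((f' ⟨0,h04⟩).2 : ℕ) := by rw [hf0]
    have bf01 : ((f ⟨0,h04⟩).1 : ℕ) < 2 := (f ⟨0,h04⟩).1.isLt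
    have bf02 : ((f ⟨0,h04⟩).2 : ℕ) < 2 := (f ⟨0,h04⟩).2.isLt
    have bf31 : ((f ⟨3,h34⟩).1 : ℕ) < 2 := (f ⟨3,h34⟩).1.isLt
    have bf32 : ((f ⟨3,h34⟩).2 : ℕ) < 2 := (f ⟨3,h34⟩).2.isLt
    have bf31' : ((f' ⟨3,h34⟩).1 : ℕ) < 2 := (f' ⟨3,h34⟩).1.isLt
    have bf32' : ((f' ⟨3,h34⟩).2 : ℕ) < 2 := (f' ⟨3,h34⟩).2.isLt
    have hf3 : f ⟨3, h34⟩ = f' ⟨3, h34⟩ := by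
      by_cases hlt : k+1 < 4^n
      · have f03 : adjB (f ⟨0,h04⟩) (f ⟨3,h34⟩) := blk_adj03 f finj fa01 fa12 fa23
        have f03' : adjB (f' ⟨0,h04⟩) (f' ⟨3,h34⟩) := blk_adj03 f' finj' fa01' fa12' fa23'
        have hj4 : 4*k+3+1 < 4^(n+1) := by omega
        have hcross := hA (4*k+3) hj4
        have hcross' := hA' (4*k+3) hj4
        rw [edgeAdj_iff] at hcross hcross'
        simp only [adjN] at hcross hcross'
        have d3 := fc 3 h34 (Nat.lt_of_succ_lt hj4)
        have d3' := fc' 3 h34 (Nat.lt_of_succ_lt hj4)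
        have n4 := nest_at ψ φ hN (4*k+3+1) hj4 (k+1) hlt (by omega)
        have n4' := nest_at ψ φ' hN' (4*k+3+1) hj4 (k+1) hlt (by omega)
        have hsq : edgeAdj (ψ ⟨k, hk⟩) (ψ ⟨k+1, hlt⟩) := hψ k hlt
        rw [edgeAdj_iff] at hsq
        simp only [adjN] at hsq
        unfold adjB at f03 f03'
        refine Prod.ext (Fin.ext ?_) (Fin.ext ?_) <;> omega
      · have pfl : 4^(n+1) - 1 < 4^(n+1) := Nat.sub_lt (by positivity) Nat.one_pos
        have pfl2 : 2^(n+1) - 1 < 2^(n+1) := Nat.sub_lt (by positivity) Nat.one_pos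
        have pos2 : (0:ℕ) < 2^(n+1) := by positivity
        have eidx : (⟨4*k+3, hj3⟩ : Fin (4^(n+1))) = ⟨4^(n+1)-1, pfl⟩ :=
          Fin.ext (show 4*k+3 = 4^(n+1)-1 by omega)
        have e1 : φ ⟨4^(n+1)-1, pfl⟩ = (⟨2^(n+1)-1, pfl2⟩, ⟨0, pos2⟩) := hE.2
        have e1' : φ' ⟨4^(n+1)-1, pfl⟩ = (⟨2^(n+1)-1, pfl2⟩, ⟨0, pos2⟩) := hE'.2
        have hlast : φ ⟨4*k+3, hj3⟩ = φ' ⟨4*k+3, hj3⟩ := by rw [eidx, e1, e1']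
        have hlv1 : ((φ ⟨4*k+3, hj3⟩).1 : ℕ) = ((φ' ⟨4*k+3, hj3⟩).1 : ℕ) := by rw [hlast]
        have hlv2 : ((φ ⟨4*k+3, hj3⟩).2 : ℕ) = ((φ' ⟨4*k+3, hj3⟩).2 : ℕ) := by rw [hlast]
        refine Prod.ext (Fin.ext ?_) (Fin.ext ?_) <;> omega
    have hf31 : ((f ⟨3,h34⟩).1 : ℕ) = ((f' ⟨3,h34⟩).1 : ℕ) := by rw [hf3]
    have hf32 : ((f ⟨3,h34⟩).2 : ℕ) = ((f' ⟨3,h34⟩).2 : ℕ) := by rw [hf3]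
    have f1e : f ⟨1, h14⟩ = f' ⟨1, h14⟩ := by
      have t1 : f ⟨1,h14⟩ = pathSecond (f ⟨0,h04⟩) (f ⟨3,h34⟩) := blk_f1 f finj fa01 fa12 fa23
      have t1' : f' ⟨1,h14⟩ = pathSecond (f' ⟨0,h04⟩) (f' ⟨3,h34⟩) := blk_f1 f' finj' fa01' fa12' fa23'
      rw [t1, t1', hf0, hf3]
    have f2e : f ⟨2, h24⟩ = f' ⟨2, h24⟩ := by
      have t2 : f ⟨2,h24⟩ = pathSecond (f ⟨3,h34⟩) (f ⟨0,h04⟩) := blk_f2 f finj fa01 fa12 fa23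
      have t2' : f' ⟨2,h24⟩ = pathSecond (f' ⟨3,h34⟩) (f' ⟨0,h04⟩) := blk_f2 f' finj' fa01' fa12' fa23'
      rw [t2, t2', hf0, hf3]
    intro r hr hj
    have fcr := fc r hr hj
    have fcr' := fc' r hr hj
    have fre : f ⟨r, hr⟩ = f' ⟨r, hr⟩ := by
      interval_cases r
      exacts [hf0, f1e, f2e, hf3]
    have frv1 : ((f ⟨r,hr⟩).1:ℕ) = ((f' ⟨r,hr⟩).1:ℕ) := by rw [fre]
    have frv2 : ((f ⟨r,hr⟩).2:ℕ) = ((f' ⟨r,hr⟩).2:ℕ) := by rw [fre]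
    refine Prod.ext (Fin.ext ?_) (Fin.ext ?_) <;> omega
  have NEXT : ∀ (k : ℕ) (hlt : k+1 < 4^n),
      (∀ hj : 4*k+3 < 4^(n+1), φ ⟨4*k+3, hj⟩ = φ' ⟨4*k+3, hj⟩) →
      ∀ hj0 : 4*(k+1)+0 < 4^(n+1), φ ⟨4*(k+1)+0, hj0⟩ = φ' ⟨4*(k+1)+0, hj0⟩ := by
    intro k hlt hexit hj0
    have hk : k < 4^n := by omega
    have hj4 : 4*k+3+1 < 4^(n+1) := by omega
    have hcross := hA (4*k+3) hj4
    have hcross' := hA' (4*k+3) hj4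
    rw [edgeAdj_iff] at hcross hcross'
    simp only [adjN] at hcross hcross'
    have hex := hexit (Nat.lt_of_succ_lt hj4)
    have hx1 : ((φ ⟨4*k+3, Nat.lt_of_succ_lt hj4⟩).1 : ℕ)
        = ((φ' ⟨4*k+3, Nat.lt_of_succ_lt hj4⟩).1 : ℕ) := by rw [hex]
    have hx2 : ((φ ⟨4*k+3, Nat.lt_of_succ_lt hj4⟩).2 : ℕ)
        = ((φ' ⟨4*k+3, Nat.lt_of_succ_lt hj4⟩).2 : ℕ) := by rw [hex]
    have nx := nest_at ψ φ hN (4*k+3) (Nat.lt_of_succ_lt hj4) k hk (by omega)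
    have n4 := nest_at ψ φ hN (4*k+3+1) hj4 (k+1) hlt (by omega)
    have n4' := nest_at ψ φ' hN' (4*k+3+1) hj4 (k+1) hlt (by omega)
    have hsq : edgeAdj (ψ ⟨k, hk⟩) (ψ ⟨k+1, hlt⟩) := hψ k hlt
    rw [edgeAdj_iff] at hsq
    simp only [adjN] at hsq
    have eidx : (⟨4*k+3+1, hj4⟩ : Fin (4^(n+1))) = ⟨4*(k+1)+0, hj0⟩ :=
      Fin.ext (show 4*k+3+1 = 4*(k+1)+0 by omega)
    rw [← eidx]
    refine Prod.ext (Fin.ext ?_) (Fin.ext ?_) <;> omega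
  have ENT : ∀ k, ∀ hk : k < 4^n, ∀ hj0 : 4*k+0 < 4^(n+1),
      φ ⟨4*k+0, hj0⟩ = φ' ⟨4*k+0, hj0⟩ := by
    intro k
    induction k with
    | zero =>
      intro hk hj0
      have pos2 : (0:ℕ) < 2^(n+1) := by positivity
      have e1 : φ ⟨4*0+0, hj0⟩ = (⟨0, pos2⟩, ⟨0, pos2⟩) := hE.1
      have e1' : φ' ⟨4*0+0, hj0⟩ = (⟨0, pos2⟩, ⟨0, pos2⟩) := hE'.1
      exact e1.trans e1'.symm
    | succ k ih =>
      intro hk hj0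
      have hk' : k < 4^n := by omega
      have blk := FILL k hk' (ih hk')
      exact NEXT k hk (fun hj => blk 3 h34 hj) hj0
  apply Equiv.ext
  intro j
  have hj4 : (j:ℕ)/4 < 4^n := by have := j.isLt; omega
  have hjj : 4*((j:ℕ)/4) + (j:ℕ)%4 < 4^(n+1) := by have := j.isLt; omega
  have hblk := FILL ((j:ℕ)/4) hj4 (ENT _ hj4) ((j:ℕ)%4) (by omega) hjj
  have ej : (⟨4*((j:ℕ)/4) + (j:ℕ)%4, hjj⟩ : Fin (4^(n+1))) = j :=
    Fin.ext (show 4*((j:ℕ)/4) + (j:ℕ)%4 = (j:ℕ) by omega)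
  rwa [ej] at hblk


lemma level1_unique (φ φ' : GridEnum 1)
    (hA : ConsecEdgeAdj φ) (hE : EndpointCond φ)
    (hA' : ConsecEdgeAdj φ') (hE' : EndpointCond φ') : φ = φ' := by
  have h41 : (4:ℕ)^1 = 4 := by norm_num
  have h21 : (2:ℕ)^1 = 2 := by norm_num
  have h04 : (0:ℕ) < 4 := by norm_num
  have h14 : (1:ℕ) < 4 := by norm_num
  have h24 : (2:ℕ) < 4 := by norm_num
  have h34 : (3:ℕ) < 4 := by norm_num
  have h02 : (0:ℕ) < 2 := by norm_num
  have h12 : (1:ℕ) < 2 := by norm_num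
  have pack : ∀ θ : GridEnum 1, ConsecEdgeAdj θ → EndpointCond θ →
      ∃ g : Fin 4 → Fin 2 × Fin 2, Function.Injective g ∧
        adjB (g 0) (g 1) ∧ adjB (g 1) (g 2) ∧ adjB (g 2) (g 3) ∧
        (∀ (r : ℕ) (hr : r < 4) (hj : r < 4^1),
          ((θ ⟨r, hj⟩).1 : ℕ) = ((g ⟨r,hr⟩).1 : ℕ) ∧
          ((θ ⟨r, hj⟩).2 : ℕ) = ((g ⟨r,hr⟩).2 : ℕ)) ∧
        g ⟨0, h04⟩ = (⟨0, h02⟩, ⟨0, h02⟩) ∧ g ⟨3, h34⟩ = (⟨1, h12⟩, ⟨0, h02⟩) := by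
    intro θ hAθ hEθ
    have hj4 : ∀ r : Fin 4, (r:ℕ) < 4^1 := fun r => by have := r.isLt; omega
    set g : Fin 4 → Fin 2 × Fin 2 := fun r =>
      (⟨((θ ⟨(r:ℕ), hj4 r⟩).1 : ℕ), by have := (θ ⟨(r:ℕ), hj4 r⟩).1.isLt; omega⟩,
       ⟨((θ ⟨(r:ℕ), hj4 r⟩).2 : ℕ), by have := (θ ⟨(r:ℕ), hj4 r⟩).2.isLt; omega⟩) with hg
    have key : ∀ (r : ℕ) (hr : r < 4) (hj : r < 4^1),
        ((θ ⟨r, hj⟩).1 : ℕ) = ((g ⟨r,hr⟩).1 : ℕ) ∧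
        ((θ ⟨r, hj⟩).2 : ℕ) = ((g ⟨r,hr⟩).2 : ℕ) := fun r hr hj => ⟨rfl, rfl⟩
    have chain : ∀ (r : ℕ) (hr : r + 1 < 4) (h0 : r < 4),
        adjB (g ⟨r, h0⟩) (g ⟨r+1, hr⟩) := by
      intro r hr h0
      have hj1 : r+1 < 4^1 := by omega
      have hadj := hAθ r hj1
      rw [edgeAdj_iff] at hadj
      simp only [adjN] at hadj
      have c1 := key r h0 (Nat.lt_of_succ_lt hj1)
      have c2 : ((θ ⟨r+1, hj1⟩).1 : ℕ) = ((g ⟨r+1, hr⟩).1 : ℕ) ∧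
          ((θ ⟨r+1, hj1⟩).2 : ℕ) = ((g ⟨r+1, hr⟩).2 : ℕ) := key (r+1) hr hj1
      unfold adjB
      omega
    have e0 : θ ⟨(((⟨0,h04⟩ : Fin 4)):ℕ), hj4 ⟨0,h04⟩⟩ = (⟨0, by omega⟩, ⟨0, by omega⟩) := hEθ.1
    have e3 : θ ⟨(((⟨3,h34⟩ : Fin 4)):ℕ), hj4 ⟨3,h34⟩⟩ = (⟨1, by omega⟩, ⟨0, by omega⟩) := hEθ.2
    have v01 : ((θ ⟨(((⟨0,h04⟩ : Fin 4)):ℕ), hj4 ⟨0,h04⟩⟩).1 : ℕ) = 0 := by rw [e0]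
    have v02 : ((θ ⟨(((⟨0,h04⟩ : Fin 4)):ℕ), hj4 ⟨0,h04⟩⟩).2 : ℕ) = 0 := by rw [e0]
    have v31 : ((θ ⟨(((⟨3,h34⟩ : Fin 4)):ℕ), hj4 ⟨3,h34⟩⟩).1 : ℕ) = 1 := by rw [e3]
    have v32 : ((θ ⟨(((⟨3,h34⟩ : Fin 4)):ℕ), hj4 ⟨3,h34⟩⟩).2 : ℕ) = 0 := by rw [e3]
    refine ⟨g, ?_, chain 0 (by norm_num) (by norm_num), chain 1 (by norm_num) (by norm_num),
      chain 2 (by norm_num) (by norm_num), key, ?_, ?_⟩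
    · intro r r' hrr
      have v1 : ((g r).1 : ℕ) = ((g r').1 : ℕ) := by rw [hrr]
      have v2 : ((g r).2 : ℕ) = ((g r').2 : ℕ) := by rw [hrr]
      have hvv : θ ⟨(r:ℕ), hj4 r⟩ = θ ⟨(r':ℕ), hj4 r'⟩ :=
        Prod.ext (Fin.ext v1) (Fin.ext v2)
      have hii := θ.injective hvv
      have hval : (r:ℕ) = (r':ℕ) := congrArg Fin.val hii
      exact Fin.ext hval
    · exact Prod.ext (Fin.ext v01) (Fin.ext v02)
    · exact Prod.ext (Fin.ext v31) (Fin.ext v32)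
  obtain ⟨g, ginj, ga01, ga12, ga23, gc, g0, g3⟩ := pack φ hA hE
  obtain ⟨g', ginj', ga01', ga12', ga23', gc', g0', g3'⟩ := pack φ' hA' hE'
  have g0e : g ⟨0,h04⟩ = g' ⟨0,h04⟩ := by rw [g0, g0']
  have g3e : g ⟨3,h34⟩ = g' ⟨3,h34⟩ := by rw [g3, g3']
  have g1e : g ⟨1,h14⟩ = g' ⟨1,h14⟩ := by
    have t1 : g ⟨1,h14⟩ = pathSecond (g ⟨0,h04⟩) (g ⟨3,h34⟩) := blk_f1 g ginj ga01 ga12 ga23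
    have t1' : g' ⟨1,h14⟩ = pathSecond (g' ⟨0,h04⟩) (g' ⟨3,h34⟩) := blk_f1 g' ginj' ga01' ga12' ga23'
    rw [t1, t1', g0e, g3e]
  have g2e : g ⟨2,h24⟩ = g' ⟨2,h24⟩ := by
    have t2 : g ⟨2,h24⟩ = pathSecond (g ⟨3,h34⟩) (g ⟨0,h04⟩) := blk_f2 g ginj ga01 ga12 ga23
    have t2' : g' ⟨2,h24⟩ = pathSecond (g' ⟨3,h34⟩) (g' ⟨0,h04⟩) := blk_f2 g' ginj' ga01' ga12' ga23'
    rw [t2, t2', g3e, g0e]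
  apply Equiv.ext
  intro j
  obtain ⟨r, hrlt⟩ := j
  have hr : r < 4 := by omega
  have cr := gc r hr hrlt
  have cr' := gc' r hr hrlt
  have gre : g ⟨r, hr⟩ = g' ⟨r, hr⟩ := by
    interval_cases r
    exacts [g0e, g1e, g2e, g3e]
  have gv1 : ((g ⟨r,hr⟩).1 : ℕ) = ((g' ⟨r,hr⟩).1 : ℕ) := by rw [gre]
  have gv2 : ((g ⟨r,hr⟩).2 : ℕ) = ((g' ⟨r,hr⟩).2 : ℕ) := by rw [gre]
  refine Prod.ext (Fin.ext ?_) (Fin.ext ?_) <;> omega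

theorem hilbert_family_unique :
    ∃! φ : ∀ n : ℕ, GridEnum n,
      ∀ n : ℕ, 1 ≤ n →
        ConsecEdgeAdj (φ n) ∧ EndpointCond (φ n) ∧ Nests (φ n) (φ (n + 1)) := by
  refine ⟨fun n => hilbertEnum n, fun n _ => ⟨hilbert_adj n, hilbert_endpoint n, hilbert_nests n⟩, ?_⟩
  intro φfam hfam
  funext m
  induction m with
  | zero =>
    apply Equiv.ext
    intro j
    have b1 := (φfam 0 j).1.isLt
    have b2 := (φfam 0 j).2.isLt
    have c1 := (hilbertEnum 0 j).1.isLt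
    have c2 := (hilbertEnum 0 j).2.isLt
    have e : (2:ℕ)^0 = 1 := by norm_num
    refine Prod.ext (Fin.ext ?_) (Fin.ext ?_) <;> omega
  | succ m ih =>
    rcases m with _ | k
    · exact level1_unique (φfam 1) (hilbertEnum 1) (hfam 1 le_rfl).1 (hfam 1 le_rfl).2.1
        (hilbert_adj 1) (hilbert_endpoint 1)
    · have ih' : φfam (k+1) = hilbertEnum (k+1) := ih
      have hnst : Nests (hilbertEnum (k+1)) (φfam (k+2)) := by
        have h := (hfam (k+1) (by omega)).2.2
        rwa [ih'] at h
      exact step_unique (hilbertEnum (k+1)) (hilbert_adj (k+1)) (φfam (k+2)) (hilbertEnum (k+2))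
        (hfam (k+2) (by omega)).1 (hfam (k+2) (by omega)).2.1 hnst
        (hilbert_adj (k+2)) (hilbert_endpoint (k+2)) (hilbert_nests (k+1))
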